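/- Let F be a field, N ≥ 1, and D = (C_1,…,C_r) a northwest diagram with all columns contained in {1,…,N}. Let V_1,…,V_r be subspaces of F^N satisfying the intersection conditions for D. Then there exists a family of subspaces (V_Ĉ) of F^N, indexed by the distinct sets Ĉ of the form ⋂_{j∈S} C_j for nonempty S ⊆ {1,…,r}, such that: dim V_Ĉ = |Ĉ| for every Ĉ; V_{C_j} = V_j for every j; and Ĉ ⊆ Ĉ' implies V_Ĉ ⊆ V_{Ĉ'}. -/

import Mathlib

/-- A diagram, given as a list of columns `C : Fin r → Finset ℕ`, is *northwest* if
for all `j ≤ j'`, `i ∈ C j` and `i' ∈ C j'` imply `min i i' ∈ C j`. -/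
def IsNorthwest {r : ℕ} (C : Fin r → Finset ℕ) : Prop :=
  ∀ j j' : Fin r, j ≤ j' → ∀ i ∈ C j, ∀ i' ∈ C j', min i i' ∈ C j

/-- `A` is an *initial subset* of `B` : `A ⊊ B` and every element of `B \ A` is greater
than every element of `A`. -/
def InitSub (A B : Finset ℕ) : Prop :=
  A ⊂ B ∧ ∀ x ∈ B \ A, ∀ y ∈ A, y < x

/-- Lexicographic comparison of finite subsets of `ℕ`, comparing the increasing lists of
elements: `A <lex B` iff the sorted list of `A` is smaller than that of `B` in the
(strict) lexicographic order on lists (in particular a proper initial segment is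
smaller). -/
def LexLT (A B : Finset ℕ) : Prop :=
  List.Lex (· < ·) (A.sort (· ≤ ·)) (B.sort (· ≤ ·))

/-- A list of columns is *lexicographic* if it is strictly increasing in `LexLT`
(in particular the columns are pairwise distinct). -/
def IsLex {r : ℕ} (C : Fin r → Finset ℕ) : Prop :=
  ∀ a b : Fin r, a < b → LexLT (C a) (C b)


open Module

set_option linter.unusedSectionVars false


section NW

open scoped Classical

variable {F : Type} [Field F] {N : ℕ} {r : ℕ}

/-- The family of intersections of columns. -/
def MemC (C : Fin r → Finset ℕ) (A : Finset ℕ) : Prop :=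
  ∃ S : Finset (Fin r), ∃ hS : S.Nonempty, S.inf' hS C = A

lemma memC_col (C : Fin r → Finset ℕ) (j : Fin r) : MemC C (C j) :=
  ⟨{j}, ⟨j, Finset.mem_singleton_self j⟩, by simp⟩

lemma memC_inf {C : Fin r → Finset ℕ} {S : Finset (Fin r)} (hS : S.Nonempty) :
    MemC C (S.inf' hS C) := ⟨S, hS, rfl⟩

lemma memC_inter {C : Fin r → Finset ℕ} {A B : Finset ℕ} (hA : MemC C A) (hB : MemC C B) :
    MemC C (A ∩ B) := by
  obtain ⟨S, hS, rfl⟩ := hA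
  obtain ⟨S', hS', rfl⟩ := hB
  refine ⟨S ∪ S', hS.mono Finset.subset_union_left, ?_⟩
  ext x
  simp only [Finset.mem_inf', Finset.mem_inter, Finset.mem_union]
  constructor
  · intro h
    exact ⟨fun j hj => h j (Or.inl hj), fun j hj => h j (Or.inr hj)⟩
  · rintro ⟨h1, h2⟩ j (hj | hj)
    exacts [h1 j hj, h2 j hj]

lemma nw_pair {C : Fin r → Finset ℕ} (hNW : IsNorthwest C) {j j' : Fin r} (h : j ≤ j')
    {x y : ℕ} (hx : x ∈ C j') (hy : y ∈ C j) (hxy : x ≤ y) : x ∈ C j := by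
  have := hNW j j' h y hy x hx
  rwa [min_eq_right hxy] at this

/-- `A` is a lower-closed subset of column `k`. -/
def LTrunc (C : Fin r → Finset ℕ) (k : Fin r) (A : Finset ℕ) : Prop :=
  A ⊆ C k ∧ ∀ x ∈ C k, ∀ y ∈ A, x ≤ y → x ∈ A

lemma trunc_comparable {C : Fin r → Finset ℕ} {k : Fin r} {A B : Finset ℕ}
    (hA : LTrunc C k A) (hB : LTrunc C k B) : A ⊆ B ∨ B ⊆ A := by
  by_contra h
  push_neg at h
  obtain ⟨a, haA, haB⟩ := Finset.not_subset.mp h.1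
  obtain ⟨b, hbB, hbA⟩ := Finset.not_subset.mp h.2
  rcases le_total a b with hab | hab
  · exact haB (hB.2 a (hA.1 haA) b hbB hab)
  · exact hbA (hA.2 b (hB.1 hbB) a haA hab)

/-- Largest (index of a) column containing `A`. -/
def kapN (C : Fin r → Finset ℕ) (A : Finset ℕ) : ℕ :=
  (Finset.univ.filter fun k => A ⊆ C k).sup fun k => (k : ℕ)

lemma le_kapN {C : Fin r → Finset ℕ} {A : Finset ℕ} {j : Fin r} (hj : A ⊆ C j) :
    (j : ℕ) ≤ kapN C A :=
  Finset.le_sup (by simp [hj])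

lemma exists_kap {C : Fin r → Finset ℕ} {A : Finset ℕ} (hA : MemC C A) :
    ∃ k : Fin r, A ⊆ C k ∧ (k : ℕ) = kapN C A := by
  have hne : (Finset.univ.filter fun k => A ⊆ C k).Nonempty := by
    obtain ⟨S, hS, rfl⟩ := hA
    obtain ⟨j, hj⟩ := hS
    exact ⟨j, Finset.mem_filter.mpr ⟨Finset.mem_univ _, Finset.inf'_le C hj⟩⟩
  obtain ⟨b, hb, hbe⟩ := Finset.exists_mem_eq_sup _ hne fun k : Fin r => (k : ℕ)
  refine ⟨b, by simpa using hb, hbe.symm⟩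

lemma trunc_of_memC {C : Fin r → Finset ℕ} (hNW : IsNorthwest C) {A : Finset ℕ}
    (hA : MemC C A) {k : Fin r} (hk : A ⊆ C k) (hmax : (k : ℕ) = kapN C A) :
    LTrunc C k A := by
  obtain ⟨S, hS, rfl⟩ := hA
  set A := S.inf' hS C with hAdef
  have hb : A ⊆ C (S.max' hS) := Finset.inf'_le C (S.max'_mem hS)
  have hbk : S.max' hS ≤ k := by
    have := le_kapN hb
    rw [← hmax] at this
    exact Fin.le_def.mpr this
  have base : ∀ x ∈ C (S.max' hS), ∀ y ∈ A, x ≤ y → x ∈ A := by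
    intro x hx y hy hxy
    rw [hAdef, Finset.mem_inf']
    intro j hj
    have hyj : y ∈ C j := (Finset.mem_inf' hS).mp hy j hj
    exact nw_pair hNW (S.le_max' j hj) hx hyj hxy
  refine ⟨hk, ?_⟩
  intro x hx y hy hxy
  have hyb : y ∈ C (S.max' hS) := hb hy
  have hxb : x ∈ C (S.max' hS) := nw_pair hNW hbk hx hyb hxy
  exact base x hxb y hy hxy

lemma trunc_inter {C : Fin r → Finset ℕ} (hNW : IsNorthwest C) {A B : Finset ℕ}
    (hA : MemC C A) (hB : MemC C B) (hk : kapN C A ≤ kapN C B) {k : Fin r}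
    (hkB : B ⊆ C k) (hke : (k : ℕ) = kapN C B) : LTrunc C k (A ∩ B) := by
  obtain ⟨ka, hka, hkae⟩ := exists_kap hA
  have hab : ka ≤ k := Fin.le_def.mpr (by omega)
  have TA : LTrunc C ka A := trunc_of_memC hNW hA hka hkae
  have TB : LTrunc C k B := trunc_of_memC hNW hB hkB hke
  refine ⟨Finset.inter_subset_right.trans hkB, ?_⟩
  intro x hx y hy hxy
  have hyA : y ∈ A := (Finset.mem_inter.mp hy).1
  have hyB : y ∈ B := (Finset.mem_inter.mp hy).2
  have hxB : x ∈ B := TB.2 x hx y hyB hxy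
  have hyka : y ∈ C ka := TA.1 hyA
  have hxka : x ∈ C ka := nw_pair hNW hab hx hyka hxy
  have hxA : x ∈ A := TA.2 x hxka y hyA hxy
  exact Finset.mem_inter.mpr ⟨hxA, hxB⟩


section Mid
variable {F V : Type} [Field F] [AddCommGroup V] [Module F V] [FiniteDimensional F V]

lemma exists_mid_aux (T : Submodule F V) :
    ∀ (d : ℕ) (L : Submodule F V), L ≤ T → finrank F L + d ≤ finrank F T →
      ∃ U : Submodule F V, L ≤ U ∧ U ≤ T ∧ finrank F U = finrank F L + d := by
  intro d
  induction d with
  | zero => exact fun L hLT _ => ⟨L, le_rfl, hLT, by simp⟩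
  | succ d ih =>
    intro L hLT hfr
    have hlt : L < T := by
      refine lt_of_le_of_ne hLT ?_
      rintro rfl
      omega
    obtain ⟨x, hxT, hxL⟩ := SetLike.exists_of_lt hlt
    have hx0 : x ≠ 0 := fun h => hxL (h ▸ L.zero_mem)
    set L' := L ⊔ (F ∙ x) with hL'
    have hL'T : L' ≤ T := sup_le hLT ((Submodule.span_singleton_le_iff_mem x T).mpr hxT)
    have hfr1 : finrank F (F ∙ x) = 1 := finrank_span_singleton hx0
    have hsum := Submodule.finrank_sup_add_finrank_inf_eq L (F ∙ x)
    rw [← hL'] at hsum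
    have hLlt : L < L' := by
      refine lt_of_le_of_ne le_sup_left ?_
      intro h
      exact hxL (h ▸ Submodule.mem_sup_right (Submodule.mem_span_singleton_self x))
    have hgt : finrank F L < finrank F L' := Submodule.finrank_lt_finrank_of_lt hLlt
    have hfrL' : finrank F L' = finrank F L + 1 := by
      rw [hfr1] at hsum
      omega
    obtain ⟨U, h1, h2, h3⟩ := ih L' hL'T (by omega)
    exact ⟨U, hLlt.le.trans h1, h2, by omega⟩

lemma exists_mid {L T : Submodule F V} (hLT : L ≤ T) {k : ℕ}
    (h1 : finrank F L ≤ k) (h2 : k ≤ finrank F T) :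
    ∃ U : Submodule F V, L ≤ U ∧ U ≤ T ∧ finrank F U = k := by
  obtain ⟨d, hd⟩ := Nat.exists_eq_add_of_le h1
  obtain ⟨U, hU1, hU2, hU3⟩ := exists_mid_aux T d L hLT (by omega)
  exact ⟨U, hU1, hU2, by omega⟩

end Mid

section Core
variable {F : Type} [Field F] {N : ℕ} {r : ℕ}
variable (C : Fin r → Finset ℕ) (W : Fin r → Submodule F (Fin N → F))

open scoped Classical

/-- Intersection of all column spaces whose column contains `A`. -/
def TT (A : Finset ℕ) : Submodule F (Fin N → F) :=
  (Finset.univ.filter fun k => A ⊆ C k).inf W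

/-- Proper sub-intersections of `A`. -/
noncomputable def PP (A : Finset ℕ) : Finset (Finset ℕ) :=
  (A.powerset.erase A).filter fun D => MemC C D

lemma mem_PP {A D : Finset ℕ} : D ∈ PP C A ↔ D ⊆ A ∧ D ≠ A ∧ MemC C D := by
  simp only [PP, Finset.mem_filter, Finset.mem_erase, Finset.mem_powerset]
  tauto

lemma PP_ssub {A D : Finset ℕ} (h : D ∈ PP C A) : D ⊂ A := by
  obtain ⟨h1, h2, _⟩ := (mem_PP C).mp h
  exact lt_of_le_of_ne h1 h2

noncomputable def Vb : Finset ℕ → Submodule F (Fin N → F) := fun A =>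
  if h : ∃ U : Submodule F (Fin N → F),
      ((PP C A).attach.sup fun D => Vb D.1) ≤ U ∧ U ≤ TT C W A ∧ finrank F U = A.card
  then h.choose else ⊥
termination_by A => A.card
decreasing_by all_goals exact Finset.card_lt_card (PP_ssub _ D.2)

/-- The sum of the spaces attached to proper sub-intersections. -/
noncomputable def LSup (A : Finset ℕ) : Submodule F (Fin N → F) :=
  (PP C A).sup (Vb C W)

lemma Vb_spec (A : Finset ℕ)
    (h : ∃ U : Submodule F (Fin N → F),
      LSup C W A ≤ U ∧ U ≤ TT C W A ∧ finrank F U = A.card) :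
    LSup C W A ≤ Vb C W A ∧ Vb C W A ≤ TT C W A ∧ finrank F (Vb C W A) = A.card := by
  have e : ((PP C A).attach.sup fun D => Vb C W D.1) = LSup C W A :=
    Finset.sup_attach _ _
  have h' : ∃ U : Submodule F (Fin N → F),
      ((PP C A).attach.sup fun D => Vb C W D.1) ≤ U ∧ U ≤ TT C W A ∧
        finrank F U = A.card := by
    rw [e]; exact h
  have spec := h'.choose_spec
  have hVb : Vb C W A = h'.choose := by
    rw [Vb, dif_pos h']
  refine ⟨?_, by rw [hVb]; exact spec.2.1, ?_⟩
  · rw [← e, hVb]; exact spec.1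
  · exact (congrArg (fun X : Submodule F (Fin N → F) => finrank F X) hVb).trans spec.2.2

lemma TT_mono {A B : Finset ℕ} (h : A ⊆ B) : TT C W A ≤ TT C W B := by
  apply Finset.inf_mono
  intro k hk
  simp only [Finset.mem_filter, Finset.mem_univ, true_and] at hk ⊢
  exact h.trans hk

lemma TT_le {A : Finset ℕ} {j : Fin r} (hj : A ⊆ C j) : TT C W A ≤ W j :=
  Finset.inf_le (by simp [hj])

variable (hdim : ∀ j, finrank F (W j) = (C j).card)
  (hinf : ∀ (S : Finset (Fin r)) (hS : S.Nonempty),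
      (S.inf' hS C).card ≤ finrank F ↥(⨅ j ∈ S, W j))

include hinf in
lemma finrank_TT {A : Finset ℕ} (hA : MemC C A) : A.card ≤ finrank F (TT C W A) := by
  set KA := Finset.univ.filter fun k => A ⊆ C k with hKA
  have hne : KA.Nonempty := by
    obtain ⟨S, hS, rfl⟩ := hA
    obtain ⟨j, hj⟩ := hS
    exact ⟨j, Finset.mem_filter.mpr ⟨Finset.mem_univ _, Finset.inf'_le C hj⟩⟩
  have key := hinf KA hne
  have e1 : KA.inf' hne C = A := by
    apply le_antisymm
    · obtain ⟨S, hS, hSe⟩ := hA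
      rw [← hSe]
      apply Finset.le_inf' hS
      intro j hj
      have hjKA : j ∈ KA := by
        rw [hKA]
        refine Finset.mem_filter.mpr ⟨Finset.mem_univ _, ?_⟩
        rw [← hSe]
        exact Finset.inf'_le C hj
      exact Finset.inf'_le C hjKA
    · apply Finset.le_inf' hne
      intro k hk
      exact (Finset.mem_filter.mp hk).2
  have e2 : (⨅ j ∈ KA, W j) = TT C W A := (Finset.inf_eq_iInf _ _).symm
  rw [e1, e2] at key
  exact key

include hdim hinf in
lemma W_mono {j k : Fin r} (h : C j ⊆ C k) : W j ≤ W k := by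
  have hne : ({j, k} : Finset (Fin r)).Nonempty := ⟨j, by simp⟩
  have key := hinf {j, k} hne
  have e1 : ({j, k} : Finset (Fin r)).inf' hne C = C j := by
    have e : ({j, k} : Finset (Fin r)).inf' hne C = C j ⊓ C k := by
      simp [Finset.inf'_insert]
    rw [e, Finset.inf_eq_inter, Finset.inter_eq_left.mpr h]
  have e2 : (⨅ i ∈ ({j, k} : Finset (Fin r)), W i) = W j ⊓ W k := by
    rw [← Finset.inf_eq_iInf]
    simp
  rw [e1, e2] at key
  have heq : W j ⊓ W k = W j :=
    Submodule.eq_of_le_of_finrank_le inf_le_left (by rw [hdim j]; exact key)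
  rw [← heq]
  exact inf_le_right

include hdim hinf in
lemma TT_col (j : Fin r) : TT C W (C j) = W j := by
  apply le_antisymm (TT_le C W (subset_refl _))
  apply Finset.le_inf
  intro k hk
  exact W_mono C W hdim hinf (Finset.mem_filter.mp hk).2

lemma sup_bound (hNW : IsNorthwest C) (A : Finset ℕ)
    (IHfr : ∀ D, MemC C D → D ⊂ A → finrank F (Vb C W D) = D.card)
    (IHmono : ∀ D E, MemC C D → MemC C E → D ⊆ E → E ⊂ A → Vb C W D ≤ Vb C W E) :
    ∀ P' : Finset (Finset ℕ), P' ⊆ PP C A →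
      finrank F ↥(P'.sup (Vb C W)) ≤ (P'.sup id).card := by
  intro P'
  induction P' using Finset.strongInduction with
  | _ P' ih =>
  intro hP'
  rcases P'.eq_empty_or_nonempty with rfl | hne
  · simp
  obtain ⟨D, hD, hDmax⟩ := Finset.exists_max_image P' (kapN C) hne
  have hDPP := hP' hD
  have hDC : MemC C D := ((mem_PP C).mp hDPP).2.2
  have hDA : D ⊂ A := PP_ssub C hDPP
  set P'' := P'.erase D with hP''def
  have hins : insert D P'' = P' := Finset.insert_erase hD
  have hsupV : P'.sup (Vb C W) = Vb C W D ⊔ P''.sup (Vb C W) := by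
    rw [← hins, Finset.sup_insert]
  have hsupI : P'.sup id = D ∪ P''.sup id := by
    rw [← hins, Finset.sup_insert, Finset.sup_eq_union]
    rfl
  have hDfr : finrank F (Vb C W D) = D.card := IHfr D hDC hDA
  rcases P''.eq_empty_or_nonempty with hPe | hPne
  · rw [hsupV, hsupI, hPe]
    simp only [Finset.sup_empty, Finset.bot_eq_empty, Finset.union_empty]
    rw [show (∅ : Finset (Finset ℕ)).sup (Vb C W) = ⊥ from Finset.sup_empty, sup_bot_eq]
    exact le_of_eq hDfr
  · obtain ⟨E0, hE0mem, hE0max⟩ :=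
      Finset.exists_max_image (P''.image (· ∩ D)) Finset.card (hPne.image _)
    obtain ⟨D0, hD0, hE0eq⟩ := Finset.mem_image.mp hE0mem
    have hD0P' : D0 ∈ P' := Finset.mem_of_mem_erase hD0
    have hD0C : MemC C D0 := ((mem_PP C).mp (hP' hD0P')).2.2
    have hD0A : D0 ⊂ A := PP_ssub C (hP' hD0P')
    obtain ⟨kD, hkD1, hkD2⟩ := exists_kap hDC
    have htruncs : ∀ D' ∈ P'', LTrunc C kD (D' ∩ D) := by
      intro D' hD'
      have hD'P' : D' ∈ P' := Finset.mem_of_mem_erase hD'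
      exact trunc_inter hNW (((mem_PP C).mp (hP' hD'P')).2.2) hDC
        (hDmax D' hD'P') hkD1 hkD2
    have hcontain : ∀ D' ∈ P'', D' ∩ D ⊆ E0 := by
      intro D' hD'
      rcases trunc_comparable (htruncs D' hD') (hE0eq ▸ htruncs D0 hD0) with h | h
      · exact h
      · have hcard : (D' ∩ D).card ≤ E0.card := hE0max _ (Finset.mem_image_of_mem _ hD')
        exact (Finset.eq_of_subset_of_card_le h hcard).ge
    have hE0C : MemC C E0 := hE0eq ▸ memC_inter hD0C hDC
    have hE0D : E0 ⊆ D := hE0eq ▸ Finset.inter_subset_right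
    have hE0A : E0 ⊂ A := lt_of_le_of_lt hE0D hDA
    have h1 : Vb C W E0 ≤ P''.sup (Vb C W) := by
      refine le_trans (IHmono E0 D0 hE0C hD0C (hE0eq ▸ Finset.inter_subset_left) hD0A) ?_
      exact Finset.le_sup hD0
    have h2 : Vb C W E0 ≤ Vb C W D := IHmono E0 D hE0C hDC hE0D hDA
    have hifr : E0.card ≤ finrank F ↥((P''.sup (Vb C W)) ⊓ Vb C W D) := by
      rw [← IHfr E0 hE0C hE0A]
      exact Submodule.finrank_mono (le_inf h1 h2)
    have hcap : (P''.sup id) ∩ D = E0 := by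
      apply Finset.Subset.antisymm
      · intro x hx
        obtain ⟨hx1, hx2⟩ := Finset.mem_inter.mp hx
        obtain ⟨D', hD', hxD'⟩ := Finset.mem_sup.mp hx1
        exact hcontain D' hD' (Finset.mem_inter.mpr ⟨hxD', hx2⟩)
      · intro x hx
        rw [← hE0eq] at hx
        obtain ⟨hx1, hx2⟩ := Finset.mem_inter.mp hx
        exact Finset.mem_inter.mpr ⟨Finset.mem_sup.mpr ⟨D0, hD0, hx1⟩, hx2⟩
    have hdimeq := Submodule.finrank_sup_add_finrank_inf_eq (P''.sup (Vb C W)) (Vb C W D)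
    have hih : finrank F ↥(P''.sup (Vb C W)) ≤ (P''.sup id).card :=
      ih P'' (Finset.erase_ssubset hD) ((Finset.erase_subset _ _).trans hP')
    have hcards := Finset.card_union_add_card_inter (P''.sup id) D
    rw [hcap] at hcards
    rw [hsupV, hsupI]
    rw [sup_comm (Vb C W D), Finset.union_comm D]
    omega

include hdim hinf in
lemma build_good (hNW : IsNorthwest C) :
    ∀ A : Finset ℕ, MemC C A →
      LSup C W A ≤ Vb C W A ∧ Vb C W A ≤ TT C W A ∧ finrank F (Vb C W A) = A.card := by
  suffices H : ∀ n : ℕ, ∀ A : Finset ℕ, A.card ≤ n → MemC C A →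
      LSup C W A ≤ Vb C W A ∧ Vb C W A ≤ TT C W A ∧ finrank F (Vb C W A) = A.card by
    exact fun A hA => H A.card A le_rfl hA
  intro n
  induction n using Nat.strong_induction_on with
  | _ n ihn =>
  intro A hcard hA
  have IHgood : ∀ E, MemC C E → E ⊂ A →
      (LSup C W E ≤ Vb C W E ∧ Vb C W E ≤ TT C W E ∧ finrank F (Vb C W E) = E.card) := by
    intro E hE hEA
    have h1 : E.card < A.card := Finset.card_lt_card hEA
    exact ihn E.card (by omega) E le_rfl hE
  have IHfr : ∀ D, MemC C D → D ⊂ A → finrank F (Vb C W D) = D.card :=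
    fun D hD hDA => (IHgood D hD hDA).2.2
  have IHmono : ∀ D E, MemC C D → MemC C E → D ⊆ E → E ⊂ A → Vb C W D ≤ Vb C W E := by
    intro D E hD hE hDE hEA
    rcases eq_or_ne D E with rfl | hne
    · exact le_rfl
    · have hDP : D ∈ PP C E := (mem_PP C).mpr ⟨hDE, hne, hD⟩
      exact (Finset.le_sup hDP).trans (IHgood E hE hEA).1
  have hLT : LSup C W A ≤ TT C W A := by
    apply Finset.sup_le
    intro D hD
    exact ((IHgood D ((mem_PP C).mp hD).2.2 (PP_ssub C hD)).2.1).trans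
      (TT_mono C W ((mem_PP C).mp hD).1)
  have hLc : finrank F (LSup C W A) ≤ A.card := by
    refine le_trans (sup_bound C W hNW A IHfr IHmono (PP C A) (subset_refl _)) ?_
    apply Finset.card_le_card
    show (PP C A).sup id ≤ A
    apply Finset.sup_le
    intro D hD
    exact ((mem_PP C).mp hD).1
  have hTc : A.card ≤ finrank F (TT C W A) := finrank_TT C W hinf hA
  exact Vb_spec C W A (exists_mid hLT hLc hTc)

end Core

/-- Proposition `conn fibers` (a), iterated: a configuration satisfying the intersection
conditions for a northwest diagram lifts to a full configuration for the blowup diagram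
`D̂`: there are subspaces `V_Ĉ`, one for each intersection `Ĉ` of columns, of dimension
`|Ĉ|`, extending the given family and respecting inclusions. -/
theorem lift_configuration_to_blowup (F : Type) [Field F] (N r : ℕ) (hN : 1 ≤ N)
    (C : Fin r → Finset ℕ) (hNW : IsNorthwest C)
    (hsub : ∀ j, C j ⊆ Finset.Icc 1 N)
    (W : Fin r → Submodule F (Fin N → F))
    (hdim : ∀ j, Module.finrank F (W j) = (C j).card)
    (hinf : ∀ (S : Finset (Fin r)) (hS : S.Nonempty),
      (S.inf' hS C).card ≤ Module.finrank F ↥(⨅ j ∈ S, W j)) :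
    ∃ V : Finset ℕ → Submodule F (Fin N → F),
      (∀ (S : Finset (Fin r)) (hS : S.Nonempty),
        Module.finrank F (V (S.inf' hS C)) = (S.inf' hS C).card) ∧
      (∀ j, V (C j) = W j) ∧
      (∀ (S S' : Finset (Fin r)) (hS : S.Nonempty) (hS' : S'.Nonempty),
        S.inf' hS C ⊆ S'.inf' hS' C → V (S.inf' hS C) ≤ V (S'.inf' hS' C)) := by
  classical
  refine ⟨Vb C W, ?_, ?_, ?_⟩
  · intro S hS
    exact (build_good C W hdim hinf hNW _ (memC_inf hS)).2.2
  · intro j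
    have hg := build_good C W hdim hinf hNW (C j) (memC_col C j)
    have hle : Vb C W (C j) ≤ W j := hg.2.1.trans (le_of_eq (TT_col C W hdim hinf j))
    exact Submodule.eq_of_le_of_finrank_le hle (by rw [hg.2.2, hdim j])
  · intro S S' hS hS' hsub
    rcases eq_or_ne (S.inf' hS C) (S'.inf' hS' C) with he | hne
    · rw [he]
    · have hP : S.inf' hS C ∈ PP C (S'.inf' hS' C) :=
        (mem_PP C).mpr ⟨hsub, hne, memC_inf hS⟩
      exact (Finset.le_sup hP).trans (build_good C W hdim hinf hNW _ (memC_inf hS')).1
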